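/- If a connected skew diagram D is a sum of fat staircases, then the columns of D have pairwise distinct lengths. -/

import Mathlib

open Finset

/-- A diagram is a finite set of cells `(row, column)`. -/
abbrev Diagram := Finset (ℕ × ℕ)

def ht (D : Diagram) : ℕ := D.sup (fun c => c.1 + 1)
def wd (D : Diagram) : ℕ := D.sup (fun c => c.2 + 1)

/-- A semistandard Young tableau of shape `D` (entries are 0-based: the paper's
value `v` corresponds to the entry `v - 1`). -/
structure SSYT (D : Diagram) where
  entry : ℕ × ℕ → ℕ
  rowWeak : ∀ i j, (i, j) ∈ D → (i, j + 1) ∈ D → entry (i, j) ≤ entry (i, j + 1)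
  colStrict : ∀ i j, (i, j) ∈ D → (i + 1, j) ∈ D → entry (i, j) < entry (i + 1, j)
  zero_outside : ∀ c, c ∉ D → entry c = 0

/-- The content of a tableau: `content T v` is the number of cells with entry `v`. -/
noncomputable def content {D : Diagram} (T : SSYT D) : ℕ →₀ ℕ := ∑ c ∈ D, Finsupp.single (T.entry c) 1

/-- `c'` is read before (or equal to) `c` in the reading word:
rows top to bottom, each row right to left. -/
def ReadBefore (c' c : ℕ × ℕ) : Prop := c'.1 < c.1 ∨ (c'.1 = c.1 ∧ c.2 ≤ c'.2)

instance (c' c : ℕ × ℕ) : Decidable (ReadBefore c' c) := by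
  unfold ReadBefore; infer_instance

/-- The reading word of `T` is lattice. -/
def IsLattice {D : Diagram} (T : SSYT D) : Prop :=
  ∀ c ∈ D, ∀ v : ℕ,
    (D.filter (fun c' => ReadBefore c' c ∧ T.entry c' = v + 1)).card ≤
    (D.filter (fun c' => ReadBefore c' c ∧ T.entry c' = v)).card

/-- The skew Schur function of a diagram, as a power series in `x_0, x_1, …`:
the coefficient of the monomial with exponents `d` is the number of SSYT of
shape `D` and content `d`. -/
noncomputable def schurOf (D : Diagram) : MvPowerSeries ℕ ℤ :=
  fun d => (Nat.card {T : SSYT D // content T = d} : ℤ)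

/-- Number of lattice SSYT of shape `D` and content `d`. -/
noncomputable def lrCount (D : Diagram) (d : ℕ →₀ ℕ) : ℕ :=
  Nat.card {T : SSYT D // IsLattice T ∧ content T = d}

/-- Littlewood–Richardson coefficient `c^lam_{mu, d}` (Littlewood–Richardson rule). -/
noncomputable def lrCoeff (lam mu : YoungDiagram) (d : ℕ →₀ ℕ) : ℕ :=
  lrCount (lam.cells \ mu.cells) d

def diagramOfRows (L : List ℕ) : Diagram :=
  (Finset.range L.length).biUnion (fun i => (Finset.range (L.getD i 0)).image (fun j => (i, j)))

/-- The row lengths of the fat staircase `δ_α`. -/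
def staircaseRows (α : List ℕ) : List ℕ :=
  ((List.range α.length).reverse.map (fun i => List.replicate (α.getD i 0) (i + 1))).flatten

/-- The fat staircase `δ_α = (n^{α_n}, …, 1^{α_1})` for `α = (α_1, …, α_n)`. -/
def fatStaircase (α : List ℕ) : Diagram := diagramOfRows (staircaseRows α)

/-- 180 degree rotation of a diagram. -/
def rotD (D : Diagram) : Diagram :=
  D.image (fun c => (ht D - 1 - c.1, wd D - 1 - c.2))

/-- The sequence of row lengths of a diagram, as a finitely supported function. -/
noncomputable def rowContent (D : Diagram) : ℕ →₀ ℕ := ∑ c ∈ D, Finsupp.single c.1 1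

/-- A content (partition) `d` is a fat staircase. -/
def IsFatStaircase (d : ℕ →₀ ℕ) : Prop :=
  ∃ α : List ℕ, (∀ a ∈ α, 0 < a) ∧ d = rowContent (fatStaircase α)

/-- Every Schur function appearing in the expansion of `s_D` is indexed by a fat staircase. -/
def IsSumOfFatStaircases (D : Diagram) : Prop :=
  ∀ d, lrCount D d ≠ 0 → IsFatStaircase d

/-- Near-concatenation of depth `i`. -/
def nearConcat (i : ℕ) (D1 D2 : Diagram) : Diagram :=
  D1.image (fun c => (c.1 + (ht D2 - i), c.2)) ∪ D2.image (fun c => (c.1, c.2 + wd D1))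

/-- Direct sum of diagrams. -/
def directSum (D1 D2 : Diagram) : Diagram := nearConcat 0 D1 D2

/-- A single column of `l` boxes. -/
def colD (l : ℕ) : Diagram := (Finset.range l).image (fun i => (i, 0))

/-- A single row of `m` boxes. -/
def rowD (m : ℕ) : Diagram := (Finset.range m).image (fun j => (0, j))

def colLenAt (D : Diagram) (j : ℕ) : ℕ := (D.filter (fun c => c.2 = j)).card
noncomputable def leftCol (D : Diagram) : ℕ := sInf {j | ∃ i, (i, j) ∈ D}
noncomputable def blCol (D : Diagram) : ℕ := sInf {j | (ht D - 1, j) ∈ D}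
noncomputable def topRow (D : Diagram) : ℕ := sInf {i | ∃ j, (i, j) ∈ D}
noncomputable def tlCol (D : Diagram) : ℕ := sInf {j | (topRow D, j) ∈ D}
def lastRowLen (D : Diagram) : ℕ := (D.filter (fun c => c.1 = ht D - 1)).card

/-- `S(F, E; k)`: the foundation `F` is placed immediately below `E`, with the
first row of `F` beginning one box below and `k` boxes left of the bottom-left
box of `E`. -/
noncomputable def SDiagG (F E : Diagram) (k : ℕ) : Diagram :=
  E.image (fun c => (c.1, c.2 + tlCol F + k)) ∪
  F.image (fun c => (c.1 + ht E, c.2 + blCol E))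

/-- `S(λ, μ, E; k)` with foundation the skew diagram `λ/μ`. -/
noncomputable def SDiag (lam mu : YoungDiagram) (E : Diagram) (k : ℕ) : Diagram :=
  SDiagG (lam.cells \ mu.cells) E k

/-- The set `R_{α,k}` (values as in the paper, i.e. 1-based). -/
def Rset (α : List ℕ) (k : ℕ) : Set ℕ :=
  {v | ∃ j, 1 ≤ j ∧ j ≤ α.length ∧ v = 1 + (α.drop (α.length - j)).sum} ∪
  {v | v = 1 ∧ 0 < k}

def rectD (a b : ℕ) : Diagram := Finset.range a ×ˢ Finset.range b

/-- The complement `D^c` of `D` in the `a × b` rectangle: the 180 degree rotation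
of the set-theoretic complement of `D` in the rectangle. -/
def complD (a b : ℕ) (D : Diagram) : Diagram :=
  (rectD a b \ D).image (fun c => (a - 1 - c.1, b - 1 - c.2))

def IsSkewDiagram (D : Diagram) : Prop :=
  ∃ lam mu : YoungDiagram, mu ≤ lam ∧ D = lam.cells \ mu.cells

def diagramOfF (d : ℕ →₀ ℕ) : Diagram :=
  d.support.biUnion (fun i => (Finset.range (d i)).image (fun j => (i, j)))

/-- A symmetric function is Schur-positive when it is a nonnegative integer
combination of Schur functions of partitions. -/
def SchurPositive (f : MvPowerSeries ℕ ℤ) : Prop :=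
  ∃ (S : Finset (ℕ →₀ ℕ)) (a : (ℕ →₀ ℕ) → ℕ),
    (∀ d ∈ S, ∀ i, d (i + 1) ≤ d i) ∧
    f = ∑ d ∈ S, (a d : ℤ) • schurOf (diagramOfF d)

def AdjCell (c c' : ℕ × ℕ) : Prop :=
  (c.1 = c'.1 ∧ (c.2 + 1 = c'.2 ∨ c'.2 + 1 = c.2)) ∨
  (c.2 = c'.2 ∧ (c.1 + 1 = c'.1 ∨ c'.1 + 1 = c.1))

def ConnectedDiagram (D : Diagram) : Prop :=
  ∀ c ∈ D, ∀ c' ∈ D, Relation.ReflTransGen (fun a b => a ∈ D ∧ b ∈ D ∧ AdjCell a b) c c'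

/-- Entry of the canonical column-filling: number of cells strictly above in the same column. -/
def entA (D : Diagram) (c : ℕ × ℕ) : ℕ :=
  if c ∈ D then (D.filter (fun c' => c'.2 = c.2 ∧ c'.1 < c.1)).card else 0

lemma entA_mem (D : Diagram) {c : ℕ × ℕ} (h : c ∈ D) :
    entA D c = (D.filter (fun c' => c'.2 = c.2 ∧ c'.1 < c.1)).card := if_pos h

lemma entA_succ (D : Diagram) {i j : ℕ} (h1 : (i, j) ∈ D) (h2 : (i + 1, j) ∈ D) :
    entA D (i + 1, j) = entA D (i, j) + 1 := by
  rw [entA_mem D h2, entA_mem D h1]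
  have hins : D.filter (fun c' => c'.2 = j ∧ c'.1 < i + 1)
      = insert (i, j) (D.filter (fun c' => c'.2 = j ∧ c'.1 < i)) := by
    ext ⟨a, b⟩
    simp only [Finset.mem_filter, Finset.mem_insert, Prod.mk.injEq]
    constructor
    · rintro ⟨hm, rfl, hlt⟩
      rcases Nat.lt_succ_iff_lt_or_eq.mp hlt with h | h
      · exact Or.inr ⟨hm, rfl, h⟩
      · exact Or.inl ⟨h, rfl⟩
    · rintro (⟨rfl, rfl⟩ | ⟨hm, rfl, hlt⟩)
      · exact ⟨h1, rfl, Nat.lt_succ_self _⟩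
      · exact ⟨hm, rfl, Nat.lt_succ_of_lt hlt⟩
  rw [hins, Finset.card_insert_of_notMem (by simp)]

/-- Column structure of a diagram with contiguous columns. -/
lemma col_structure (D : Diagram)
    (hcol : ∀ i m i' j, (i, j) ∈ D → (i', j) ∈ D → i ≤ m → m ≤ i' → (m, j) ∈ D)
    (j : ℕ) (hj : 0 < colLenAt D j) :
    ∃ t, (∀ i, (i, j) ∈ D ↔ t ≤ i ∧ i < t + colLenAt D j) ∧
      (∀ u, u < colLenAt D j → entA D (t + u, j) = u) := by
  classical
  set C := D.filter (fun c => c.2 = j) with hC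
  set ℓ := colLenAt D j with hl
  have hmemC : ∀ c, c ∈ C ↔ c ∈ D ∧ c.2 = j := fun c => Finset.mem_filter
  set I := C.image Prod.fst with hI
  have hIcard : I.card = ℓ := by
    have hinj : Set.InjOn Prod.fst ((D.filter (fun c => c.2 = j)) : Set (ℕ × ℕ)) := by
      intro c hc c' hc' h
      simp only [Finset.coe_filter, Set.mem_setOf_eq] at hc hc'
      exact Prod.ext h (hc.2.trans hc'.2.symm)
    rw [hI, hC, Finset.card_image_of_injOn hinj, hl, colLenAt]
  have hIne : I.Nonempty := by
    rw [← Finset.card_pos, hIcard]; exact hj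
  set t := I.min' hIne with ht
  have hmemI : ∀ i, i ∈ I ↔ (i, j) ∈ D := by
    intro i
    constructor
    · intro hi
      obtain ⟨c, hc, hc1⟩ := Finset.mem_image.mp hi
      obtain ⟨hcD, hc2⟩ := (hmemC c).mp hc
      have : c = (i, j) := Prod.ext hc1 hc2
      rwa [this] at hcD
    · intro hi
      exact Finset.mem_image.mpr ⟨(i, j), (hmemC _).mpr ⟨hi, rfl⟩, rfl⟩
  have htD : (t, j) ∈ D := (hmemI t).mp (I.min'_mem hIne)
  have hsub : I ⊆ Finset.Ico t (t + ℓ) := by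
    intro i hi
    rw [Finset.mem_Ico]
    refine ⟨I.min'_le i hi, ?_⟩
    by_contra hge
    push_neg at hge
    have hIcc : Finset.Icc t i ⊆ I := by
      intro m hm
      rw [Finset.mem_Icc] at hm
      exact (hmemI m).mpr (hcol t m i j htD ((hmemI i).mp hi) hm.1 hm.2)
    have := Finset.card_le_card hIcc
    rw [Nat.card_Icc, hIcard] at this
    omega
  have hIeq : I = Finset.Ico t (t + ℓ) := by
    apply Finset.eq_of_subset_of_card_le hsub
    rw [Nat.card_Ico, hIcard]; omega
  have hiff : ∀ i, (i, j) ∈ D ↔ t ≤ i ∧ i < t + ℓ := by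
    intro i
    rw [← hmemI, hIeq, Finset.mem_Ico]
  refine ⟨t, hiff, ?_⟩
  intro u hu
  induction u with
  | zero =>
    simp only [Nat.add_zero]
    rw [entA_mem D htD, Finset.card_eq_zero]
    ext ⟨a, b⟩
    simp only [Finset.mem_filter, Finset.notMem_empty, iff_false, not_and]
    rintro ha rfl hlt
    have := ((hiff a).mp ha).1
    omega
  | succ u ih =>
    have h1 : (t + u, j) ∈ D := (hiff _).mpr ⟨by omega, by omega⟩
    have h2 : (t + (u + 1), j) ∈ D := (hiff _).mpr ⟨by omega, by omega⟩
    have : t + (u + 1) = (t + u) + 1 := by omega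
    rw [this] at h2 ⊢
    rw [entA_succ D h1 h2, ih (by omega)]

lemma ent_lt_colLen (D : Diagram)
    (hcol : ∀ i m i' j, (i, j) ∈ D → (i', j) ∈ D → i ≤ m → m ≤ i' → (m, j) ∈ D)
    {i j : ℕ} (hc : (i, j) ∈ D) : entA D (i, j) < colLenAt D j := by
  have hj : 0 < colLenAt D j := by
    rw [colLenAt, Finset.card_pos]
    exact ⟨(i, j), Finset.mem_filter.mpr ⟨hc, rfl⟩⟩
  obtain ⟨t, hiff, hent⟩ := col_structure D hcol j hj
  obtain ⟨h1, h2⟩ := (hiff i).mp hc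
  have h3 := hent (i - t) (by omega)
  have h4 : t + (i - t) = i := by omega
  rw [h4] at h3
  omega

lemma ent_pred (D : Diagram)
    (hcol : ∀ i m i' j, (i, j) ∈ D → (i', j) ∈ D → i ≤ m → m ≤ i' → (m, j) ∈ D)
    {c1 c2 : ℕ} {v : ℕ} (hc : (c1, c2) ∈ D) (hv : entA D (c1, c2) = v + 1) :
    0 < c1 ∧ (c1 - 1, c2) ∈ D ∧ entA D (c1 - 1, c2) = v := by
  have hne : (D.filter (fun c' => c'.2 = c2 ∧ c'.1 < c1)).Nonempty := by
    rw [← Finset.card_pos, ← entA_mem D hc, hv]; omega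
  obtain ⟨⟨a, b⟩, hab⟩ := hne
  obtain ⟨habD, rfl, hlt⟩ := Finset.mem_filter.mp hab
  obtain ⟨m, rfl⟩ : ∃ m, c1 = m + 1 := ⟨c1 - 1, by omega⟩
  dsimp only at hv hc hlt
  have hmem : (m, b) ∈ D := hcol a m (m + 1) b habD hc (by omega) (by omega)
  have h5 := entA_succ D hmem hc
  simp only [Nat.add_sub_cancel]
  exact ⟨by omega, hmem, by omega⟩

lemma skew_hcol {D : Diagram} {lam mu : YoungDiagram} (hle : mu ≤ lam)
    (hDeq : D = lam.cells \ mu.cells) :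
    ∀ i m i' j, (i, j) ∈ D → (i', j) ∈ D → i ≤ m → m ≤ i' → (m, j) ∈ D := by
  subst hDeq
  intro i m i' j h1 h2 him hmi
  rw [Finset.mem_sdiff, YoungDiagram.mem_cells, YoungDiagram.mem_cells] at h1 h2 ⊢
  refine ⟨lam.up_left_mem hmi le_rfl h2.1, fun hm => h1.2 (mu.up_left_mem him le_rfl hm)⟩

lemma skew_hrow {D : Diagram} {lam mu : YoungDiagram} (hle : mu ≤ lam)
    (hDeq : D = lam.cells \ mu.cells) :
    ∀ i i' j, (i', j) ∈ D → (i, j + 1) ∈ D → i' ≤ i → (i', j + 1) ∈ D := by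
  subst hDeq
  intro i i' j h1 h2 hii
  rw [Finset.mem_sdiff, YoungDiagram.mem_cells, YoungDiagram.mem_cells] at h1 h2 ⊢
  refine ⟨lam.up_left_mem hii le_rfl h2.1, fun hm => h1.2 (mu.up_left_mem le_rfl (by omega) hm)⟩

/-- The canonical column-superstandard filling. -/
def canonT (D : Diagram)
    (hcol : ∀ i m i' j, (i, j) ∈ D → (i', j) ∈ D → i ≤ m → m ≤ i' → (m, j) ∈ D)
    (hrow : ∀ i i' j, (i', j) ∈ D → (i, j + 1) ∈ D → i' ≤ i → (i', j + 1) ∈ D) :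
    SSYT D where
  entry := entA D
  rowWeak := by
    intro i j h1 h2
    rw [entA_mem D h1, entA_mem D h2]
    apply Finset.card_le_card_of_injOn (fun c => (c.1, c.2 + 1))
    · intro c hc
      rw [Finset.mem_coe, Finset.mem_filter] at hc ⊢
      obtain ⟨hcD, hc2, hc1⟩ := hc
      obtain ⟨a, b⟩ := c
      dsimp only at hc2 hc1 ⊢
      refine ⟨?_, by omega, hc1⟩
      subst hc2
      exact hrow i a b hcD h2 (by omega)
    · intro c _ c' _ h
      obtain ⟨a, b⟩ := c; obtain ⟨a', b'⟩ := c'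
      simp only [Prod.mk.injEq] at h ⊢
      omega
  colStrict := by
    intro i j h1 h2
    rw [entA_succ D h1 h2]
    omega
  zero_outside := fun c hc => if_neg hc

lemma canonT_entry (D : Diagram) (hcol) (hrow) : (canonT D hcol hrow).entry = entA D := rfl

lemma content_apply {D : Diagram} (T : SSYT D) (v : ℕ) :
    content T v = (D.filter (fun c => T.entry c = v)).card := by
  rw [content, Finsupp.finset_sum_apply, Finset.card_filter]
  apply Finset.sum_congr rfl
  intro c _
  rw [Finsupp.single_apply]

lemma canonT_lattice (D : Diagram) (hcol) (hrow) : IsLattice (canonT D hcol hrow) := by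
  intro c hc v
  rw [canonT_entry]
  apply Finset.card_le_card_of_injOn (fun c' => (c'.1 - 1, c'.2))
  · intro c' hc'
    rw [Finset.mem_coe, Finset.mem_filter] at hc' ⊢
    obtain ⟨hc'D, hrb, hent⟩ := hc'
    obtain ⟨a, b⟩ := c'
    obtain ⟨hpos, hmem, hent'⟩ := ent_pred D hcol hc'D hent
    refine ⟨hmem, ?_, hent'⟩
    rcases hrb with h | h
    · exact Or.inl (by dsimp only at h ⊢; omega)
    · exact Or.inl (by dsimp only at h hpos ⊢; omega)
  · intro c' hc' c'' hc''
    simp only [Finset.coe_filter, Set.mem_setOf_eq] at hc' hc''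
    obtain ⟨a, b⟩ := c'; obtain ⟨a', b'⟩ := c''
    have h1 := (ent_pred D hcol hc'.1 hc'.2.2).1
    have h2 := (ent_pred D hcol hc''.1 hc''.2.2).1
    simp only [Prod.mk.injEq]
    omega

lemma main_count (D : Diagram)
    (hcol : ∀ i m i' j, (i, j) ∈ D → (i', j) ∈ D → i ≤ m → m ≤ i' → (m, j) ∈ D)
    {j1 j2 m : ℕ} (hne : j1 ≠ j2)
    (h1 : colLenAt D j1 = m + 1) (h2 : colLenAt D j2 = m + 1) :
    (D.filter (fun c => entA D c = m + 1)).card + 2 ≤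
      (D.filter (fun c => entA D c = m)).card := by
  obtain ⟨t1, hiff1, hent1⟩ := col_structure D hcol j1 (by omega)
  obtain ⟨t2, hiff2, hent2⟩ := col_structure D hcol j2 (by omega)
  set x1 : ℕ × ℕ := (t1 + m, j1) with hx1
  set x2 : ℕ × ℕ := (t2 + m, j2) with hx2
  have hx1D : x1 ∈ D := (hiff1 _).mpr ⟨by omega, by omega⟩
  have hx2D : x2 ∈ D := (hiff2 _).mpr ⟨by omega, by omega⟩
  have hx1e : entA D x1 = m := hent1 m (by omega)
  have hx2e : entA D x2 = m := hent2 m (by omega)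
  have hx12 : x1 ≠ x2 := fun h => hne (congrArg Prod.snd h)
  have hsubx : ({x1, x2} : Finset (ℕ × ℕ)) ⊆ D.filter (fun c => entA D c = m) := by
    intro x hx
    rcases Finset.mem_insert.mp hx with rfl | hx
    · exact Finset.mem_filter.mpr ⟨hx1D, hx1e⟩
    · rw [Finset.mem_singleton] at hx; subst hx
      exact Finset.mem_filter.mpr ⟨hx2D, hx2e⟩
  have hcard : (D.filter (fun c => entA D c = m + 1)).card ≤
      ((D.filter (fun c => entA D c = m)) \ {x1, x2}).card := by
    apply Finset.card_le_card_of_injOn (fun c => (c.1 - 1, c.2))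
    · intro c hc
      rw [Finset.mem_coe, Finset.mem_filter] at hc
      obtain ⟨hcD, hent⟩ := hc
      obtain ⟨a, b⟩ := c
      obtain ⟨hpos, hmem, hent'⟩ := ent_pred D hcol hcD hent
      rw [Finset.mem_coe, Finset.mem_sdiff, Finset.mem_filter]
      refine ⟨⟨hmem, hent'⟩, ?_⟩
      intro hx
      have hbne1 : b ≠ j1 := by
        intro hb; subst hb
        have := ent_lt_colLen D hcol hcD
        omega
      have hbne2 : b ≠ j2 := by
        intro hb; subst hb
        have := ent_lt_colLen D hcol hcD
        omega
      rcases Finset.mem_insert.mp hx with h | h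
      · exact hbne1 (congrArg Prod.snd h)
      · rw [Finset.mem_singleton] at h
        exact hbne2 (congrArg Prod.snd h)
    · intro c hc c' hc'
      simp only [Finset.coe_filter, Set.mem_setOf_eq] at hc hc'
      obtain ⟨a, b⟩ := c; obtain ⟨a', b'⟩ := c'
      have h1' := (ent_pred D hcol hc.1 hc.2).1
      have h2' := (ent_pred D hcol hc'.1 hc'.2).1
      simp only [Prod.mk.injEq]
      omega
  have hsd : ((D.filter (fun c => entA D c = m)) \ {x1, x2}).card =
      (D.filter (fun c => entA D c = m)).card - 2 := by
    rw [Finset.card_sdiff_of_subset hsubx, Finset.card_pair hx12]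
  have h2le := Finset.card_le_card hsubx
  rw [Finset.card_pair hx12] at h2le
  omega

lemma ssyt_ext {D : Diagram} {T T' : SSYT D} (h : T.entry = T'.entry) : T = T' := by
  cases T; cases T'; simpa using h

lemma lrCount_ne_zero {D : Diagram} (T : SSYT D) (hT : IsLattice T) :
    lrCount D (content T) ≠ 0 := by
  classical
  set d := content T with hd
  have hfin : Finite {S : SSYT D // IsLattice S ∧ content S = d} := by
    set N := d.support.sup id with hN
    have hbound : ∀ (S : SSYT D), content S = d → ∀ c ∈ D, S.entry c < N + 1 := by
      intro S hS c hc
      have h1 : 0 < content S (S.entry c) := by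
        rw [content_apply, Finset.card_pos]
        exact ⟨c, Finset.mem_filter.mpr ⟨hc, rfl⟩⟩
      have h2 : S.entry c ∈ d.support := by
        rw [Finsupp.mem_support_iff, ← hS]
        omega
      have := Finset.le_sup (f := id) h2
      simp only [id] at this
      omega
    apply Finite.of_injective
      (fun S : {S : SSYT D // IsLattice S ∧ content S = d} =>
        (fun c : {c : ℕ × ℕ // c ∈ D} => (⟨S.1.entry c.1, hbound S.1 S.2.2 c.1 c.2⟩ : Fin (N + 1))))
    intro S S' hSS
    apply Subtype.ext
    apply ssyt_ext
    funext c
    by_cases hc : c ∈ D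
    · have := congrFun hSS ⟨c, hc⟩
      simpa using congrArg Fin.val this
    · rw [S.1.zero_outside c hc, S'.1.zero_outside c hc]
  have hne : Nonempty {S : SSYT D // IsLattice S ∧ content S = d} := ⟨⟨T, hT, rfl⟩⟩
  rw [lrCount]
  exact Nat.card_pos.ne'

lemma mem_diagramOfRows (L : List ℕ) (c : ℕ × ℕ) :
    c ∈ diagramOfRows L ↔ c.2 < L.getD c.1 0 := by
  obtain ⟨a, b⟩ := c
  simp only [diagramOfRows, Finset.mem_biUnion, Finset.mem_image, Finset.mem_range]
  constructor
  · rintro ⟨i, hi, j, hj, h⟩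
    rw [Prod.mk.injEq] at h
    obtain ⟨rfl, rfl⟩ := h
    exact hj
  · intro h
    have hlen : a < L.length := by
      by_contra hlen
      rw [List.getD_eq_default _ _ (by omega)] at h
      omega
    exact ⟨a, hlen, b, h, rfl⟩

lemma rowContent_apply (D : Diagram) (v : ℕ) :
    rowContent D v = (D.filter (fun c => c.1 = v)).card := by
  rw [rowContent, Finsupp.finset_sum_apply, Finset.card_filter]
  apply Finset.sum_congr rfl
  intro c _
  rw [Finsupp.single_apply]

lemma rowContent_diagramOfRows (L : List ℕ) (v : ℕ) :
    rowContent (diagramOfRows L) v = L.getD v 0 := by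
  rw [rowContent_apply]
  have : (diagramOfRows L).filter (fun c => c.1 = v)
      = (Finset.range (L.getD v 0)).image (fun j => (v, j)) := by
    ext ⟨a, b⟩
    simp only [Finset.mem_filter, mem_diagramOfRows, Finset.mem_image, Finset.mem_range]
    constructor
    · rintro ⟨h1, rfl⟩
      exact ⟨b, h1, rfl⟩
    · rintro ⟨j, hj, h⟩
      rw [Prod.mk.injEq] at h
      obtain ⟨rfl, rfl⟩ := h
      exact ⟨hj, rfl⟩
  rw [this, Finset.card_image_of_injective _ (fun x y hxy => by simpa using congrArg Prod.snd hxy),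
    Finset.card_range]

theorem flat_step (n : ℕ) (k : ℕ → ℕ) (hk : ∀ i < n, 1 ≤ k i) :
    (∀ v, (((List.range n).reverse.map (fun i => List.replicate (k i) (i+1))).flatten).getD v 0 ≤
      (((List.range n).reverse.map (fun i => List.replicate (k i) (i+1))).flatten).getD (v+1) 0 + 1) ∧
    (n ≠ 0 → (((List.range n).reverse.map (fun i => List.replicate (k i) (i+1))).flatten).getD 0 0 = n) := by
  induction n with
  | zero => simp
  | succ n ih =>
    have hrw : ((List.range (n+1)).reverse.map (fun i => List.replicate (k i) (i+1))).flatten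
        = List.replicate (k n) (n+1) ++ ((List.range n).reverse.map (fun i => List.replicate (k i) (i+1))).flatten := by
      rw [List.range_succ, List.reverse_append]; simp
    obtain ⟨ih1, ih2⟩ := ih (fun i hi => hk i (Nat.lt_succ_of_lt hi))
    set L := ((List.range n).reverse.map (fun i => List.replicate (k i) (i+1))).flatten with hL
    have hkn : 1 ≤ k n := hk n (Nat.lt_succ_self n)
    have hrep : ∀ v, v < k n → (List.replicate (k n) (n+1)).getD v 0 = n + 1 := by
      intro v hv
      rw [List.getD_eq_getElem _ _ (by simpa using hv)]; simp
    constructor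
    · intro v
      rw [hrw]
      by_cases h1 : v + 1 < k n
      · rw [List.getD_append _ _ _ _ (by simp; omega),
          List.getD_append _ _ _ _ (by simpa using h1), hrep _ (by omega), hrep _ h1]; omega
      · by_cases h2 : v < k n
        · rw [List.getD_append _ _ _ _ (by simpa using h2),
            List.getD_append_right _ _ _ _ (by simp; omega), hrep _ h2]
          have : v + 1 - (List.replicate (k n) (n+1)).length = 0 := by simp; omega
          rw [this]
          rcases Nat.eq_zero_or_pos n with hn | hn
          · subst hn; simp only [hL]; simp
          · rw [ih2 (by omega)]
        · rw [List.getD_append_right _ _ _ _ (by simp; omega),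
            List.getD_append_right _ _ _ _ (by simp; omega)]
          have hh : v + 1 - (List.replicate (k n) (n+1)).length
              = (v - (List.replicate (k n) (n+1)).length) + 1 := by simp; omega
          rw [hh]; exact ih1 _
    · intro _
      rw [hrw, List.getD_append _ _ _ _ (by simp; omega), hrep 0 hkn]

lemma fat_step {d : ℕ →₀ ℕ} (h : IsFatStaircase d) : ∀ v, d v ≤ d (v + 1) + 1 := by
  obtain ⟨α, hα, rfl⟩ := h
  intro v
  rw [fatStaircase, rowContent_diagramOfRows, rowContent_diagramOfRows]
  have hk : ∀ i < α.length, 1 ≤ α.getD i 0 := by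
    intro i hi
    rw [List.getD_eq_getElem _ _ hi]
    exact hα _ (List.getElem_mem hi)
  have := (flat_step α.length (fun i => α.getD i 0) hk).1 v
  rw [staircaseRows]
  exact this


/-- a connected skew diagram that is a sum of fat staircases has
columns of pairwise distinct lengths. -/
theorem sumOfFatStaircases_distinct_colLens (D : Diagram) (hD : IsSkewDiagram D)
    (hconn : ConnectedDiagram D) (h : IsSumOfFatStaircases D) :
    ∀ j1 j2 : ℕ, j1 ≠ j2 → 0 < colLenAt D j1 → 0 < colLenAt D j2 →
      colLenAt D j1 ≠ colLenAt D j2 := by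
  obtain ⟨lam, mu, hle, hDeq⟩ := hD
  have hcol := skew_hcol hle hDeq
  have hrow := skew_hrow hle hDeq
  intro j1 j2 hne hp1 hp2 heq
  obtain ⟨m, hm⟩ : ∃ m, colLenAt D j1 = m + 1 := ⟨colLenAt D j1 - 1, by omega⟩
  have hm2 : colLenAt D j2 = m + 1 := by omega
  have hmain := main_count D hcol hne hm hm2
  set T := canonT D hcol hrow with hT
  have hlat := canonT_lattice D hcol hrow
  have hfat : IsFatStaircase (content T) := h (content T) (lrCount_ne_zero T hlat)
  have hstep := fat_step hfat m
  have hc : ∀ v, content T v = (D.filter (fun c => entA D c = v)).card := by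
    intro v
    rw [content_apply]
    simp only [hT, canonT_entry]
  rw [hc m, hc (m + 1)] at hstep
  omega
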